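/- arXiv:1503.02792 — 2 statements merged into one kernel-verified Lean document; each statement's English description precedes it below -/
import Mathlib

section
/- Let X be a finite set and b, p, p' partitions of X. Then: (1) p' ⊣_b p if and only if p' is coarser than p and p' ≤_b p; (2) p' ⊐_b p if and only if p' is finer than p and p' ≤_b p. -/
open Sum
open scoped Classical

noncomputable section

namespace PartitionPaper

variable {X : Type*}

/-- The number of blocks of a partition of `X`, encoded as a setoid on `X`. -/
def nc (p : Setoid X) : ℕ := Nat.card (Quotient p)

/-- The geodesic distance `d(p,p') = (nc p + nc p')/2 - nc (p ⊔ p')`. -/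
def pdist (p q : Setoid X) : ℚ :=
  ((nc p : ℚ) + (nc q : ℚ)) / 2 - (nc (p ⊔ q) : ℚ)

/-- Geodesic order with base partition `b` : `p' ≤_b p`. -/
def geoLE (b p' p : Setoid X) : Prop := pdist b p' + pdist p' p = pdist b p

/-- Coarser-compatible order `p' ⊣_b p` : `p'` coarser than `p` and
`nc (p' ⊔ b) = nc (p ⊔ b)`.  (In the setoid lattice, `p ≤ p'` means `p` is finer.) -/
def coarserComp (b p' p : Setoid X) : Prop :=
  p ≤ p' ∧ nc (p' ⊔ b) = nc (p ⊔ b)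

/-- Finer-compatible order `p' ⊐_b p` : `p'` finer than `p` and
`nc p' - nc (p' ⊔ b) = nc p - nc (p ⊔ b)`. -/
def finerComp (b p' p : Setoid X) : Prop :=
  p' ≤ p ∧ (nc p' : ℤ) - (nc (p' ⊔ b) : ℤ) = (nc p : ℤ) - (nc (p ⊔ b) : ℤ)

/-- `p'` is obtained from `p` by gluing two blocks of `p` into one. -/
def IsGluing (p p' : Setoid X) : Prop := p ≤ p' ∧ nc p' + 1 = nc p

/-- The Cayley graph on partitions of `X`: an edge iff one partition is obtained
from the other by gluing two of its blocks into one. -/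
def glueGraph (X : Type*) : SimpleGraph (Setoid X) where
  Adj p q := IsGluing p q ∨ IsGluing q p
  symm := ⟨fun _ _ h => h.elim Or.inr Or.inl⟩
  loopless := ⟨by
    intro p h
    rcases h with ⟨-, h⟩ | ⟨-, h⟩ <;> omega⟩

/-- The segment `[p₁, p₂]` for the geodesic distance. -/
def seg (p₁ p₂ : Setoid X) : Set (Setoid X) :=
  {p | pdist p₁ p + pdist p p₂ = pdist p₁ p₂}

/-- The defect of `p'` from being on `[b, p]`. -/
def df (b p' p : Setoid X) : ℚ := pdist b p' + pdist p' p - pdist b p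

/-- Admissible one-step splits: `p'` is obtained by cutting a (pivotal) block of `p`
into two blocks in such a way that the join with `b` gains one block. -/
def Delta (b p : Setoid X) : Set (Setoid X) :=
  {p' | p' ≤ p ∧ nc p' = nc p + 1 ∧ nc (p' ⊔ b) = nc (p ⊔ b) + 1}

/-- The admissible splits `Sp_b(p) = ⋃ₘ Δ_b^m(p)`. -/
def Sp (b p : Setoid X) : Set (Setoid X) :=
  {p' | Relation.ReflTransGen (fun u v => v ∈ Delta b u) p p'}

/-- The admissible gluings `Gl_b(p)`: partitions obtained by gluing blocks of `p`
without altering the number of blocks of the join with `b`. -/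
def Gl (b p : Setoid X) : Set (Setoid X) :=
  {p' | p ≤ p' ∧ nc (p' ⊔ b) = nc (p ⊔ b)}

/-- `p'` is directly smaller than `p` for the relation `r`. -/
def DirectlySmaller (r : Setoid X → Setoid X → Prop) (p' p : Setoid X) : Prop :=
  r p' p ∧ p' ≠ p ∧ ¬ ∃ p'', p'' ≠ p ∧ p'' ≠ p' ∧ r p' p'' ∧ r p'' p

/-- The block of the partition `p` corresponding to a class `c`. -/
def blockSet (p : Setoid X) (c : Quotient p) : Set X := {x | Quotient.mk p x = c}

/-- The number of blocks of `q` contained in the block `c` of `p`. -/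
def numSubBlocks (q p : Setoid X) (c : Quotient p) : ℕ :=
  Nat.card {d : Quotient q // blockSet q d ⊆ blockSet p c}

/-- The number of blocks of `p` containing exactly `i` blocks of `q`. -/
def rcount (q p : Setoid X) (i : ℕ) : ℕ :=
  Nat.card {c : Quotient p // numSubBlocks q p c = i}

/-- The Möbius function of the refinement order:
`μ_f(q,p) = (-1)^(nc q - nc p) ∏_i ((i-1)!)^(r_i)` for `q` finer than `p`. -/
def muf (q p : Setoid X) : ℤ :=
  (-1) ^ (nc q - nc p) *
    ∏ i ∈ Finset.range (nc q + 1), ((Nat.factorial (i - 1) : ℤ)) ^ (rcount q p i)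

/-- `P_k`: partitions of `{1,…,k} ∪ {1',…,k'}`, the left summand being the
unprimed (top) row and the right summand the primed (bottom) row. -/
abbrev Pk (k : ℕ) := Setoid (Fin k ⊕ Fin k)

/-- The identity partition `id_k = {{i, i'} : 1 ≤ i ≤ k}`. -/
def idk (k : ℕ) : Pk k := Setoid.ker (Sum.elim id id)

/-- The permutation partition associated with `σ`, with blocks `{i, σ(i)'}`. -/
def permPartition {k : ℕ} (σ : Equiv.Perm (Fin k)) : Pk k :=
  Setoid.ker (Sum.elim id σ.symm)

/-- `S_k`, the set of permutation partitions. -/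
def Sk (k : ℕ) : Set (Pk k) := Set.range (permPartition (k := k))

/-- `B_k`, the set of Brauer partitions: all blocks have exactly two elements. -/
def Bk (k : ℕ) : Set (Pk k) := {p | ∀ x, Nat.card {y | p.r x y} = 2}

/-- Embedding of the top/bottom rows of the upper diagram `q` into the
three-row diagram (top ⊕ (middle ⊕ bottom)). -/
def upMap (k : ℕ) : Fin k ⊕ Fin k → Fin k ⊕ (Fin k ⊕ Fin k) :=
  Sum.elim Sum.inl (fun i => Sum.inr (Sum.inl i))

/-- Embedding of the top/bottom rows of the lower diagram `p` into the
three-row diagram. -/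
def downMap (k : ℕ) : Fin k ⊕ Fin k → Fin k ⊕ (Fin k ⊕ Fin k) :=
  Sum.elim (fun i => Sum.inr (Sum.inl i)) (fun i => Sum.inr (Sum.inr i))

/-- The partition of the three-row diagram obtained by stacking a diagram of `q`
on top of a diagram of `p` (identifying the bottom row of `q` with the top row
of `p`): the equivalence relation generated by the copies of `q` and `p`. -/
def stackSetoid {k : ℕ} (p q : Pk k) : Setoid (Fin k ⊕ (Fin k ⊕ Fin k)) :=
  sInf {s | ∀ x y,
    ((∃ a b, upMap k a = x ∧ upMap k b = y ∧ q.r a b) ∨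
     (∃ a b, downMap k a = x ∧ downMap k b = y ∧ p.r a b)) → s.r x y}

/-- The composition `p ∘ q` (a diagram of `q` stacked above a diagram of `p`),
obtained by restricting the stacked partition to the outer rows. -/
def comp {k : ℕ} (p q : Pk k) : Pk k :=
  Setoid.comap (Sum.elim Sum.inl (fun i => Sum.inr (Sum.inr i))) (stackSetoid p q)

/-- `κ(p,q)`: the number of connected components of the stacked diagram entirely
contained in the middle row. -/
def kappaP {k : ℕ} (p q : Pk k) : ℕ :=
  Nat.card {c : Quotient (stackSetoid p q) //
    ∀ x, Quotient.mk (stackSetoid p q) x = c → ∃ i : Fin k, x = Sum.inr (Sum.inl i)}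

/-- The transpose `ᵗp`, exchanging the two rows. -/
def transpose {k : ℕ} (p : Pk k) : Pk k := Setoid.comap Sum.swap p

/-- The disjoint-union partition on a sum type. -/
def sumSetoid {α β : Type*} (p : Setoid α) (q : Setoid β) : Setoid (α ⊕ β) :=
  Setoid.ker (Sum.map (Quotient.mk p) (Quotient.mk q))

/-- Reindexing of the rows for the tensor product. -/
def reindex (k l : ℕ) :
    Fin (k + l) ⊕ Fin (k + l) → (Fin k ⊕ Fin k) ⊕ (Fin l ⊕ Fin l) :=
  Sum.elim
    (fun j => Sum.elim (fun a => Sum.inl (Sum.inl a)) (fun b => Sum.inr (Sum.inl b))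
      (finSumFinEquiv.symm j))
    (fun j => Sum.elim (fun a => Sum.inl (Sum.inr a)) (fun b => Sum.inr (Sum.inr b))
      (finSumFinEquiv.symm j))

/-- The tensor product `p ⊗ q ∈ P_{k+l}`: a diagram of `p` placed to the left of
a diagram of `q`. -/
def tensor {k l : ℕ} (p : Pk k) (q : Pk l) : Pk (k + l) :=
  Setoid.comap (reindex k l) (sumSetoid p q)

/-- The `≺`-defect `η(p,q)`. -/
def eta {k : ℕ} (p q : Pk k) : ℚ :=
  pdist (idk k) p + pdist (idk k) q - pdist (idk k) (comp p q)
    - ((k : ℚ) + (nc (comp p q) : ℚ) - (nc p : ℚ) - (nc q : ℚ)) / 2 - (kappaP p q : ℚ)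

/-- The Kreweras complement of `p'` in `p`: the set of `p''` with `p = p' ∘ p''`
realizing equality in the `≺`-defect inequality. -/
def Krew {k : ℕ} (p p' : Pk k) : Set (Pk k) :=
  {p'' | comp p' p'' = p ∧ eta p' p'' = 0}

/-- `p' ≺ p` : `p'` is an admissible prefix of `p`. -/
def prec {k : ℕ} (p' p : Pk k) : Prop :=
  ∃ p'', comp p' p'' = p ∧ eta p' p'' = 0

/-- The partition of `{1,…,k}` into the orbits (cycles) of the permutation `σ`. -/
def cycleSetoid {k : ℕ} (σ : Equiv.Perm (Fin k)) : Setoid (Fin k) :=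
  ⟨σ.SameCycle,
    ⟨fun x => Equiv.Perm.SameCycle.refl σ x, fun h => h.symm, fun h₁ h₂ => h₁.trans h₂⟩⟩

/-- A partition of `{1,…,k}` is non-crossing if there are no `a < b < c < d` with
`a, c` in one block and `b, d` in a different block. -/
def NonCrossing {k : ℕ} (π : Setoid (Fin k)) : Prop :=
  ¬ ∃ a b c d : Fin k, a < b ∧ b < c ∧ c < d ∧ π.r a c ∧ π.r b d ∧ ¬ π.r a b

/-- The map sending a permutation partition to the partition of `{1,…,k}` into
the orbits of the corresponding bijection (the blocks of `p ⊔ id_k` restricted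
to the top row). -/
def orbitMap {k : ℕ} (p : Pk k) : Setoid (Fin k) :=
  Setoid.comap (Sum.inl : Fin k → Fin k ⊕ Fin k) (p ⊔ idk k)

/-- The permutation `(1,k+1)(2,k+2)⋯(k,2k)` of `{1,…,2k}`. -/
def tauPerm (k : ℕ) : Equiv.Perm (Fin (k + k)) :=
  (finSumFinEquiv.symm.trans (Equiv.sumComm (Fin k) (Fin k))).trans finSumFinEquiv

/-- The left part of a partition in `P_{k₁+k₂}`. -/
def leftPart {k₁ k₂ : ℕ} (p : Pk (k₁ + k₂)) : Pk k₁ :=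
  Setoid.comap (Sum.map (Fin.castAdd k₂) (Fin.castAdd k₂)) p

/-- The right part of a partition in `P_{k₁+k₂}`. -/
def rightPart {k₁ k₂ : ℕ} (p : Pk (k₁ + k₂)) : Pk k₂ :=
  Setoid.comap (Sum.map (Fin.natAdd k₁) (Fin.natAdd k₁)) p

/-- The `p`-moment `m_p(E_N) = Tr_N(E_N ᵗp)/N^{nc(p ⊔ id_k)}
`= ∑_{p'} (E_N)_{p'} N^{nc(p ⊔ p') - nc(p ⊔ id_k)}`. -/
def momentF {k : ℕ} (E : ℕ → Pk k → ℂ) (p : Pk k) (N : ℕ) : ℂ :=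
  ∑ᶠ p' : Pk k, E N p' * (N : ℂ) ^ ((nc (p ⊔ p') : ℤ) - (nc (p ⊔ idk k) : ℤ))

/-- The `p`-cumulant `κ_p(E_N) = N^{nc p - nc (p ⊔ id_k)} (E_N)_p`. -/
def cumulantF {k : ℕ} (E : ℕ → Pk k → ℂ) (p : Pk k) (N : ℕ) : ℂ :=
  (N : ℂ) ^ ((nc p : ℤ) - (nc (p ⊔ idk k) : ℤ)) * E N p

/-- Characterization of the coarser- and finer-compatible orders:
`p' ⊣_b p` iff `p'` is coarser than `p` and `p' ≤_b p`; `p' ⊐_b p` iff `p'` is finer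
than `p` and `p' ≤_b p`. (In the setoid lattice, `p ≤ p'` means `p` is finer than `p'`.) -/
theorem statement2 {X : Type*} [Finite X] (b p p' : Setoid X) :
    (coarserComp b p' p ↔ p ≤ p' ∧ geoLE b p' p) ∧
    (finerComp b p' p ↔ p' ≤ p ∧ geoLE b p' p) := by
  have key1 : ∀ (_ : p ≤ p'), (nc (p' ⊔ b) = nc (p ⊔ b) ↔ geoLE b p' p) := by
    intro h
    unfold geoLE pdist
    rw [sup_eq_left.mpr h, sup_comm b p', sup_comm b p]
    constructor
    · intro hnc; rw [hnc]; ring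
    · intro he
      have : (nc (p' ⊔ b) : ℚ) = nc (p ⊔ b) := by linarith
      exact_mod_cast this
  have key2 : ∀ (_ : p' ≤ p),
      ((nc p' : ℤ) - (nc (p' ⊔ b) : ℤ) = (nc p : ℤ) - (nc (p ⊔ b) : ℤ) ↔ geoLE b p' p) := by
    intro h
    unfold geoLE pdist
    rw [sup_eq_right.mpr h, sup_comm b p', sup_comm b p]
    constructor
    · intro hz
      have : (nc p' : ℚ) - (nc (p' ⊔ b) : ℚ) = (nc p : ℚ) - (nc (p ⊔ b) : ℚ) := by
        exact_mod_cast hz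
      linarith
    · intro he
      have : (nc p' : ℚ) - (nc (p' ⊔ b) : ℚ) = (nc p : ℚ) - (nc (p ⊔ b) : ℚ) := by linarith
      exact_mod_cast this
  constructor
  · constructor
    · rintro ⟨h, hnc⟩; exact ⟨h, (key1 h).mp hnc⟩
    · rintro ⟨h, hg⟩; exact ⟨h, (key1 h).mpr hg⟩
  · constructor
    · rintro ⟨h, hnc⟩; exact ⟨h, (key2 h).mp hnc⟩
    · rintro ⟨h, hg⟩; exact ⟨h, (key2 h).mpr hg⟩

end PartitionPaper
end
end

section
/- Let k be a positive integer. For any p ∈ P_k, the set Sp(p) ∩ B_k of admissible splits of p (with base partition id_k) that are Brauer partitions has at most one element. In particular, for any p ∈ B_k, Sp(p) = {p}. -/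
open Sum
open scoped Classical

noncomputable section

namespace PartitionPaper

variable {X : Type*}

/-! ### Auxiliary material for Statement 11 -/

section Statement11Aux

variable {Y : Type*}

/-- The setoid generated by identifying the two points `x` and `y`. -/
def pairS (x y : Y) : Setoid Y :=
  ⟨fun a b => a = b ∨ (a = x ∧ b = y) ∨ (a = y ∧ b = x),
    ⟨fun _ => Or.inl rfl, by
      rintro a b (h | ⟨h1, h2⟩ | ⟨h1, h2⟩)
      · exact Or.inl h.symm
      · exact Or.inr (Or.inr ⟨h2, h1⟩)
      · exact Or.inr (Or.inl ⟨h2, h1⟩), by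
      rintro a b c (h1 | ⟨h1, h2⟩ | ⟨h1, h2⟩) (h3 | ⟨h3, h4⟩ | ⟨h3, h4⟩)
      · exact Or.inl (h1.trans h3)
      · exact Or.inr (Or.inl ⟨h1.trans h3, h4⟩)
      · exact Or.inr (Or.inr ⟨h1.trans h3, h4⟩)
      · exact Or.inr (Or.inl ⟨h1, h3.symm.trans h2⟩)
      · exact Or.inr (Or.inl ⟨h1, h4⟩)
      · exact Or.inl (h1.trans h4.symm)
      · exact Or.inr (Or.inr ⟨h1, h3.symm.trans h2⟩)
      · exact Or.inl (h1.trans h4.symm)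
      · exact Or.inr (Or.inr ⟨h1, h4⟩)⟩⟩

lemma pairS_rel_left_right (x y : Y) : pairS x y x y := Or.inr (Or.inl ⟨rfl, rfl⟩)

lemma pairS_le_of_rel {s : Setoid Y} {x y : Y} (h : s x y) : pairS x y ≤ s := by
  rintro a b (h1 | ⟨h1, h2⟩ | ⟨h1, h2⟩)
  · rw [h1]
  · rw [h1, h2]; exact h
  · rw [h1, h2]; exact s.symm' h

lemma sup_pairS_of_rel {s : Setoid Y} {x y : Y} (h : s x y) : s ⊔ pairS x y = s :=
  sup_eq_left.mpr (pairS_le_of_rel h)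

/-- Explicit description of the join of a setoid with a pair setoid. -/
def supPair (s : Setoid Y) (x y : Y) : Setoid Y :=
  ⟨fun a b => s a b ∨ (s a x ∧ s y b) ∨ (s a y ∧ s x b),
    ⟨fun a => Or.inl (s.refl' a), by
      rintro a b (h | ⟨h1, h2⟩ | ⟨h1, h2⟩)
      · exact Or.inl (s.symm' h)
      · exact Or.inr (Or.inr ⟨s.symm' h2, s.symm' h1⟩)
      · exact Or.inr (Or.inl ⟨s.symm' h2, s.symm' h1⟩), by
      rintro a b c (hab | ⟨h1, h2⟩ | ⟨h1, h2⟩) (hbc | ⟨h3, h4⟩ | ⟨h3, h4⟩)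
      · exact Or.inl (s.trans' hab hbc)
      · exact Or.inr (Or.inl ⟨s.trans' hab h3, h4⟩)
      · exact Or.inr (Or.inr ⟨s.trans' hab h3, h4⟩)
      · exact Or.inr (Or.inl ⟨h1, s.trans' h2 hbc⟩)
      · exact Or.inr (Or.inl ⟨h1, h4⟩)
      · exact Or.inl (s.trans' h1 h4)
      · exact Or.inr (Or.inr ⟨h1, s.trans' h2 hbc⟩)
      · exact Or.inl (s.trans' h1 h4)
      · exact Or.inr (Or.inr ⟨h1, h4⟩)⟩⟩

lemma sup_pairS_eq (s : Setoid Y) (x y : Y) : s ⊔ pairS x y = supPair s x y := by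
  apply le_antisymm
  · apply sup_le
    · intro a b h
      exact Or.inl h
    · rintro a b (h1 | ⟨h1, h2⟩ | ⟨h1, h2⟩)
      · rw [h1]
      · rw [h1, h2]; exact Or.inr (Or.inl ⟨s.refl' x, s.refl' y⟩)
      · rw [h1, h2]; exact Or.inr (Or.inr ⟨s.refl' y, s.refl' x⟩)
  · have hs : s ≤ s ⊔ pairS x y := le_sup_left
    have hp : pairS x y ≤ s ⊔ pairS x y := le_sup_right
    have hxy : (s ⊔ pairS x y) x y := hp (pairS_rel_left_right x y)
    rintro a b (h | ⟨h1, h2⟩ | ⟨h1, h2⟩)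
    · exact hs h
    · exact Setoid.trans' _ (hs h1) (Setoid.trans' _ hxy (hs h2))
    · exact Setoid.trans' _ (hs h1) (Setoid.trans' _ (Setoid.symm' _ hxy) (hs h2))

lemma sup_pairS_rel_iff {s : Setoid Y} {x y a b : Y} :
    (s ⊔ pairS x y) a b ↔ s a b ∨ (s a x ∧ s y b) ∨ (s a y ∧ s x b) := by
  rw [sup_pairS_eq]; rfl

/-- The canonical map between quotients by comparable setoids. -/
def qmap {s t : Setoid Y} (h : s ≤ t) : Quotient s → Quotient t :=
  Quotient.map' id fun _ _ hab => h hab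

lemma qmap_mk {s t : Setoid Y} (h : s ≤ t) (x : Y) :
    qmap h (Quotient.mk s x) = Quotient.mk t x := rfl

lemma qmap_surjective {s t : Setoid Y} (h : s ≤ t) : Function.Surjective (qmap h) := by
  intro c
  obtain ⟨x, rfl⟩ := Quotient.exists_rep c
  exact ⟨Quotient.mk s x, rfl⟩

lemma nc_le_of_le [Finite Y] {s t : Setoid Y} (h : s ≤ t) : nc t ≤ nc s :=
  Nat.card_le_card_of_surjective (qmap h) (qmap_surjective h)

lemma nc_le_card [Finite Y] (s : Setoid Y) : nc s ≤ Nat.card Y :=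
  Nat.card_le_card_of_surjective (Quotient.mk s) fun c => Quotient.exists_rep c

lemma setoid_eq_of_le_of_nc_le [Finite Y] {s t : Setoid Y} (h : s ≤ t) (hc : nc s ≤ nc t) :
    s = t := by
  have hbij : Function.Bijective (qmap h) :=
    (qmap_surjective h).bijective_of_nat_card_le hc
  ext a b
  constructor
  · exact fun hab => h hab
  · intro hab
    have : qmap h (Quotient.mk s a) = qmap h (Quotient.mk s b) := by
      rw [qmap_mk, qmap_mk]
      exact Quotient.sound hab
    exact Quotient.eq.mp (hbij.injective this)

end Statement11Aux

section Counting

variable {A B : Type*}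

lemma fiber_filter_eq_pair [Fintype A] [DecidableEq A] {f : A → B} {b : B} {a₁ a₂ : A}
    [DecidablePred fun a => f a = b]
    (hiff : ∀ a : A, f a = b ↔ (a = a₁ ∨ a = a₂)) :
    Finset.univ.filter (fun a => f a = b) = {a₁, a₂} := by
  ext a
  simp [hiff a]

lemma card_eq_two_mul_of_fibers [Finite A] [Finite B] (f : A → B)
    (h : ∀ b : B, ∃ a₁ a₂ : A, a₁ ≠ a₂ ∧ ∀ a : A, f a = b ↔ (a = a₁ ∨ a = a₂)) :
    Nat.card A = 2 * Nat.card B := by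
  have _ := Fintype.ofFinite A
  have _ := Fintype.ofFinite B
  classical
  rw [Nat.card_eq_fintype_card, Nat.card_eq_fintype_card, ← Finset.card_univ,
    Finset.card_eq_sum_card_fiberwise (f := f) (t := Finset.univ) (fun x _ => Finset.mem_univ _)]
  have hcard : ∀ b : B, (Finset.univ.filter (fun a => f a = b)).card = 2 := by
    intro b
    obtain ⟨a₁, a₂, hne, hiff⟩ := h b
    rw [fiber_filter_eq_pair hiff, Finset.card_pair hne]
  rw [Finset.sum_congr rfl (fun b _ => hcard b), Finset.sum_const, Finset.card_univ,
    smul_eq_mul, mul_comm]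

lemma card_eq_add_one_of_fibers [Finite A] [Finite B] (f : A → B) (b₀ : B)
    (h1 : ∀ b : B, b ≠ b₀ → ∃ a : A, ∀ a' : A, f a' = b ↔ a' = a)
    (h2 : ∃ a₁ a₂ : A, a₁ ≠ a₂ ∧ ∀ a : A, f a = b₀ ↔ (a = a₁ ∨ a = a₂)) :
    Nat.card A = Nat.card B + 1 := by
  have _ := Fintype.ofFinite A
  have _ := Fintype.ofFinite B
  classical
  rw [Nat.card_eq_fintype_card, Nat.card_eq_fintype_card, ← Finset.card_univ,
    Finset.card_eq_sum_card_fiberwise (f := f) (t := Finset.univ) (fun x _ => Finset.mem_univ _)]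
  have hcard : ∀ b : B, (Finset.univ.filter (fun a => f a = b)).card
      = if b = b₀ then 2 else 1 := by
    intro b
    by_cases hb : b = b₀
    · subst hb
      obtain ⟨a₁, a₂, hne, hiff⟩ := h2
      rw [fiber_filter_eq_pair hiff, Finset.card_pair hne, if_pos rfl]
    · obtain ⟨a, ha⟩ := h1 b hb
      rw [if_neg hb]
      have : Finset.univ.filter (fun a' => f a' = b) = {a} := by
        ext a'; simp [ha a']
      rw [this, Finset.card_singleton]
  rw [Finset.sum_congr rfl (fun b _ => hcard b)]
  have hsplit : ∀ b : B, (if b = b₀ then 2 else 1) = 1 + (if b = b₀ then 1 else 0) := by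
    intro b; split_ifs <;> rfl
  rw [Finset.sum_congr rfl (fun b _ => hsplit b), Finset.sum_add_distrib,
    Finset.sum_const, Finset.sum_ite_eq' Finset.univ b₀ (fun _ => 1),
    if_pos (Finset.mem_univ b₀), Finset.card_univ, smul_eq_mul, mul_one]

lemma card_le_two_mul_of_fibers [Finite A] [Finite B] (f : A → B)
    (h : ∀ b : B, ∃ a₁ a₂ : A, ∀ a : A, f a = b → (a = a₁ ∨ a = a₂)) :
    Nat.card A ≤ 2 * Nat.card B := by
  have _ := Fintype.ofFinite A
  have _ := Fintype.ofFinite B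
  classical
  rw [Nat.card_eq_fintype_card, Nat.card_eq_fintype_card, ← Finset.card_univ,
    Finset.card_eq_sum_card_fiberwise (f := f) (t := Finset.univ) (fun x _ => Finset.mem_univ _)]
  have hcard : ∀ b : B, (Finset.univ.filter (fun a => f a = b)).card ≤ 2 := by
    intro b
    obtain ⟨a₁, a₂, hsub⟩ := h b
    calc (Finset.univ.filter (fun a => f a = b)).card
        ≤ ({a₁, a₂} : Finset A).card := by
          apply Finset.card_le_card
          intro a ha
          have := hsub a (Finset.mem_filter.mp ha).2
          simp [this]
      _ ≤ 2 := Finset.card_insert_le a₁ {a₂} |>.trans (by simp)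
  calc ∑ b : B, (Finset.univ.filter (fun a => f a = b)).card
      ≤ ∑ _b : B, 2 := Finset.sum_le_sum fun b _ => hcard b
    _ = 2 * Fintype.card B := by rw [Finset.sum_const, Finset.card_univ, smul_eq_mul, mul_comm]

end Counting

section PairCount

variable {Y : Type*}

lemma nc_sup_pairS_of_not_rel [Finite Y] {s : Setoid Y} {x y : Y} (h : ¬ s x y) :
    nc (s ⊔ pairS x y) + 1 = nc s := by
  have hle : s ≤ s ⊔ pairS x y := le_sup_left
  have hxy : (s ⊔ pairS x y) x y :=
    (le_sup_right : pairS x y ≤ s ⊔ pairS x y) (pairS_rel_left_right x y)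
  have key : nc s = nc (s ⊔ pairS x y) + 1 := by
    apply card_eq_add_one_of_fibers (qmap hle) (Quotient.mk _ x)
    · intro b hb
      obtain ⟨z, rfl⟩ := Quotient.exists_rep b
      refine ⟨Quotient.mk s z, fun a' => ?_⟩
      obtain ⟨w, rfl⟩ := Quotient.exists_rep a'
      rw [qmap_mk]
      constructor
      · intro hw
        rcases sup_pairS_rel_iff.mp (Quotient.eq.mp hw) with h' | ⟨h1, h2⟩ | ⟨h1, h2⟩
        · exact Quotient.sound h'
        · exact absurd
            (Quotient.sound (Setoid.trans' _ (Setoid.symm' _ (hle h2)) (Setoid.symm' _ hxy)))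
            hb
        · exact absurd (Quotient.sound (Setoid.symm' _ (hle h2))) hb
      · intro hw
        exact Quotient.sound (hle (Quotient.eq.mp hw))
    · refine ⟨Quotient.mk s x, Quotient.mk s y, fun hc => h (Quotient.eq.mp hc), fun a => ?_⟩
      obtain ⟨w, rfl⟩ := Quotient.exists_rep a
      rw [qmap_mk]
      constructor
      · intro hw
        rcases sup_pairS_rel_iff.mp (Quotient.eq.mp hw) with h' | ⟨h1, h2⟩ | ⟨h1, h2⟩
        · exact Or.inl (Quotient.sound h')
        · exact Or.inl (Quotient.sound h1)
        · exact Or.inr (Quotient.sound h1)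
      · rintro (hw | hw)
        · exact Quotient.sound (hle (Quotient.eq.mp hw))
        · exact Quotient.sound
            (sup_pairS_rel_iff.mpr (Or.inr (Or.inr ⟨Quotient.eq.mp hw, s.refl' x⟩)))
  omega

lemma nc_le_nc_sup_pairS_add_one [Finite Y] (s : Setoid Y) (x y : Y) :
    nc s ≤ nc (s ⊔ pairS x y) + 1 := by
  by_cases h : s x y
  · rw [sup_pairS_of_rel h]; omega
  · exact le_of_eq (nc_sup_pairS_of_not_rel h).symm

lemma nc_mono_step [Finite Y] (s c : Setoid Y) (x y : Y) :
    nc (s ⊔ pairS x y) + nc (s ⊔ c) ≤ nc s + nc (s ⊔ pairS x y ⊔ c) := by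
  have hcomm : s ⊔ pairS x y ⊔ c = s ⊔ c ⊔ pairS x y := sup_right_comm s (pairS x y) c
  by_cases h : s x y
  · rw [sup_pairS_of_rel h]
  · have h1 : nc (s ⊔ pairS x y) + 1 = nc s := nc_sup_pairS_of_not_rel h
    have h2 : nc (s ⊔ c) ≤ nc (s ⊔ c ⊔ pairS x y) + 1 := nc_le_nc_sup_pairS_add_one _ x y
    rw [hcomm]
    omega

/-- Successively join a setoid with a list of pairs. -/
def foldPairs (a : Setoid Y) : List (Y × Y) → Setoid Y
  | [] => a
  | z :: L => foldPairs (a ⊔ pairS z.1 z.2) L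

lemma le_foldPairs (a : Setoid Y) : ∀ L : List (Y × Y), a ≤ foldPairs a L
  | [] => le_rfl
  | z :: L => le_trans le_sup_left (le_foldPairs (a ⊔ pairS z.1 z.2) L)

lemma foldPairs_le {b : Setoid Y} :
    ∀ (L : List (Y × Y)) (a : Setoid Y), a ≤ b → (∀ z ∈ L, b z.1 z.2) → foldPairs a L ≤ b
  | [], _, ha, _ => ha
  | z :: L, a, ha, hL => by
    refine foldPairs_le L _ (sup_le ha (pairS_le_of_rel (hL z List.mem_cons_self))) ?_
    exact fun w hw => hL w (List.mem_cons_of_mem z hw)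

lemma rel_foldPairs_of_mem :
    ∀ (L : List (Y × Y)) (a : Setoid Y) {u v : Y}, (u, v) ∈ L → foldPairs a L u v
  | [], _, _, _, h => absurd h List.not_mem_nil
  | z :: L, a, u, v, h => by
    rcases List.mem_cons.mp h with h | h
    · have : (a ⊔ pairS z.1 z.2) u v := by
        cases h
        exact (le_sup_right : pairS u v ≤ a ⊔ pairS u v) (pairS_rel_left_right u v)
      exact le_foldPairs _ L this
    · exact rel_foldPairs_of_mem L _ h

lemma nc_mono_fold [Finite Y] (c : Setoid Y) :
    ∀ (L : List (Y × Y)) (a : Setoid Y),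
      nc (foldPairs a L) + nc (a ⊔ c) ≤ nc a + nc (foldPairs a L ⊔ c)
  | [], a => le_rfl
  | z :: L, a => by
    have ih := nc_mono_fold c L (a ⊔ pairS z.1 z.2)
    have step := nc_mono_step a c z.1 z.2
    simp only [foldPairs] at *
    omega

lemma nc_mono [Finite Y] {a b : Setoid Y} (c : Setoid Y) (h : a ≤ b) :
    nc b + nc (a ⊔ c) ≤ nc a + nc (b ⊔ c) := by
  classical
  have _ := Fintype.ofFinite Y
  set L := (Finset.univ.filter (fun z : Y × Y => b z.1 z.2)).toList with hL
  have hfold : foldPairs a L = b := by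
    apply le_antisymm
    · refine foldPairs_le L a h ?_
      intro z hz
      have := Finset.mem_filter.mp (Finset.mem_toList.mp hz)
      exact this.2
    · intro u v huv
      refine rel_foldPairs_of_mem L a ?_
      rw [hL, Finset.mem_toList, Finset.mem_filter]
      exact ⟨Finset.mem_univ _, huv⟩
  have := nc_mono_fold c L a
  rwa [hfold] at this

end PairCount

theorem perm_apply_inv_self {α : Type*} (f : Equiv.Perm α) (x : α) : f (f⁻¹ x) = x :=
  f.apply_symm_apply x

section CycleSetoid

variable {Y : Type*}

open Equiv

/-- The setoid of the same-cycle relation of a permutation. -/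
def cycS (π : Equiv.Perm Y) : Setoid Y := Equiv.Perm.SameCycle.setoid π

lemma cycS_rel {π : Equiv.Perm Y} {a b : Y} : cycS π a b ↔ π.SameCycle a b := Iff.rfl

lemma cycS_rel_apply (π : Equiv.Perm Y) (z : Y) : cycS π z (π z) :=
  ⟨1, by simp⟩

/-- Any setoid relating each point to its image contains the same-cycle setoid. -/
lemma cycS_le_of_rel_apply {π : Equiv.Perm Y} {s : Setoid Y} (h : ∀ z, s z (π z)) :
    cycS π ≤ s := by
  have h' : ∀ z, s z (π⁻¹ z) := fun z => by
    have := h (π⁻¹ z)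
    rw [perm_apply_inv_self] at this
    exact s.symm' this
  have key : ∀ (n : ℤ) (a : Y), s a ((π ^ n) a) := by
    intro n
    induction n using Int.induction_on with
    | zero => intro a; simpa using s.refl' a
    | succ n ih =>
      intro a
      rw [zpow_add_one, Equiv.Perm.mul_apply]
      exact s.trans' (h a) (ih (π a))
    | pred n ih =>
      intro a
      rw [zpow_sub_one, Equiv.Perm.mul_apply]
      exact s.trans' (h' a) (ih (π⁻¹ a))
  rintro a b ⟨n, rfl⟩
  exact key n a

lemma cycS_one : cycS (1 : Equiv.Perm Y) = (⊥ : Setoid Y) := by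
  ext a b
  constructor
  · intro h
    have : a = b := Equiv.Perm.sameCycle_one.mp h
    exact this ▸ (⊥ : Setoid Y).refl' a
  · intro h
    have : a = b := h
    exact this ▸ Equiv.Perm.SameCycle.refl 1 a

lemma nc_bot [Finite Y] : nc (⊥ : Setoid Y) = Nat.card Y := by
  refine (Nat.card_eq_of_bijective (Quotient.mk ⊥) ⟨?_, fun c => Quotient.exists_rep c⟩).symm
  intro a b hab
  have h := Quotient.eq.mp hab
  rw [Setoid.bot_def] at h
  exact h

lemma cycS_mul_swap_le (π : Equiv.Perm Y) (u v : Y) :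
    cycS (π * Equiv.swap u v) ≤ cycS π ⊔ pairS u v := by
  apply cycS_le_of_rel_apply
  intro z
  have h1 : (cycS π ⊔ pairS u v) z (Equiv.swap u v z) := by
    rcases eq_or_ne z u with hzu | hzu
    · rw [hzu, Equiv.swap_apply_left]
      exact (le_sup_right : pairS u v ≤ _) (pairS_rel_left_right u v)
    rcases eq_or_ne z v with hzv | hzv
    · rw [hzv, Equiv.swap_apply_right]
      exact Setoid.symm' _ ((le_sup_right : pairS u v ≤ _) (pairS_rel_left_right u v))
    · rw [Equiv.swap_apply_of_ne_of_ne hzu hzv]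
  have h2 : (cycS π ⊔ pairS u v) (Equiv.swap u v z) (π (Equiv.swap u v z)) :=
    (le_sup_left : cycS π ≤ _) (cycS_rel_apply π _)
  have := Setoid.trans' _ h1 h2
  rwa [Equiv.Perm.mul_apply]

end CycleSetoid

section SwapCycle

variable {Y : Type*}

open Equiv

/-- Multiplying on the right by a swap of two points on the same cycle disconnects them. -/
lemma not_sameCycle_swap_of_sameCycle [Finite Y] {π : Equiv.Perm Y} {u v : Y}
    (huv : u ≠ v) (h : π.SameCycle u v) : ¬ (π * Equiv.swap u v).SameCycle u v := by
  set π' := π * Equiv.swap u v with hπ'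
  have hπ'v : π' v = π u := by
    rw [hπ', Equiv.Perm.mul_apply, Equiv.swap_apply_right]
  have hex : ∃ j : ℕ, (π ^ (j + 1)) u = v := by
    obtain ⟨i, _, hi⟩ := h.exists_pow_eq'
    cases i with
    | zero => exact absurd (by simpa using hi) huv
    | succ j => exact ⟨j, hi⟩
  classical
  set d := Nat.find hex with hd
  have hdv : (π ^ (d + 1)) u = v := Nat.find_spec hex
  have hdmin : ∀ j < d, (π ^ (j + 1)) u ≠ v := fun j hj => Nat.find_min hex hj
  have hpt_ne : ∀ j < d, (π ^ (j + 1)) u ≠ u ∧ (π ^ (j + 1)) u ≠ v := by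
    intro j hj
    refine ⟨?_, hdmin j hj⟩
    intro hu
    have harith : (π ^ (d + 1)) u = (π ^ (d - j)) ((π ^ (j + 1)) u) := by
      rw [← Equiv.Perm.mul_apply, ← pow_add]
      congr 2
      omega
    rw [hu] at harith
    have : (π ^ ((d - j - 1) + 1)) u = v := by
      rw [show d - j - 1 + 1 = d - j by omega, ← harith, hdv]
    exact hdmin (d - j - 1) (by omega) this
  set S : Set Y := {z | z = v ∨ ∃ j < d, z = (π ^ (j + 1)) u} with hS
  have hvS : v ∈ S := Or.inl rfl
  have hclosed : ∀ z ∈ S, π' z ∈ S := by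
    rintro z (rfl | ⟨j, hj, rfl⟩)
    · rw [hπ'v]
      rcases Nat.eq_zero_or_pos d with hd0 | hd0
      · left
        have := hdv
        rw [hd0] at this
        simpa using this
      · right
        exact ⟨0, hd0, by simp⟩
    · have hne := hpt_ne j hj
      have hswap : Equiv.swap u v ((π ^ (j + 1)) u) = (π ^ (j + 1)) u :=
        Equiv.swap_apply_of_ne_of_ne hne.1 hne.2
      have hstep : π' ((π ^ (j + 1)) u) = (π ^ (j + 1 + 1)) u := by
        rw [hπ', Equiv.Perm.mul_apply, hswap, ← Equiv.Perm.mul_apply, ← pow_succ']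
      rw [hstep]
      rcases Nat.lt_or_ge (j + 1) d with hlt | hge
      · exact Or.inr ⟨j + 1, hlt, rfl⟩
      · left
        rw [← hdv, show j + 1 = d by omega]
  have horbit : ∀ n : ℕ, (π' ^ n) v ∈ S := by
    intro n
    induction n with
    | zero => simpa using hvS
    | succ n ih =>
      have hstep : (π' ^ (n + 1)) v = π' ((π' ^ n) v) := by
        rw [pow_succ', Equiv.Perm.mul_apply]
      rw [hstep]
      exact hclosed _ ih
  intro hsc
  obtain ⟨i, _, hi⟩ := hsc.symm.exists_pow_eq'
  have : u ∈ S := hi ▸ horbit i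
  rcases this with h' | ⟨j, hj, h'⟩
  · exact huv h'
  · exact (hpt_ne j hj).1 h'.symm

/-- Multiplying on the right by a swap of two points on different cycles connects them. -/
lemma sameCycle_swap_of_not_sameCycle [Finite Y] {π : Equiv.Perm Y} {u v : Y}
    (h : ¬ π.SameCycle u v) : (π * Equiv.swap u v).SameCycle u v := by
  set π' := π * Equiv.swap u v with hπ'
  have hπ'v : π' v = π u := by
    rw [hπ', Equiv.Perm.mul_apply, Equiv.swap_apply_right]
  have hex : ∃ j : ℕ, (π ^ (j + 1)) u = u := by
    have hpos : 0 < orderOf π := by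
      have : Finite (Equiv.Perm Y) := by infer_instance
      exact orderOf_pos π
    refine ⟨orderOf π - 1, ?_⟩
    rw [show orderOf π - 1 + 1 = orderOf π by omega, pow_orderOf_eq_one]
    rfl
  classical
  set m := Nat.find hex with hm
  have hmu : (π ^ (m + 1)) u = u := Nat.find_spec hex
  have hmmin : ∀ j < m, (π ^ (j + 1)) u ≠ u := fun j hj => Nat.find_min hex hj
  have hpt_ne : ∀ j < m, (π ^ (j + 1)) u ≠ u ∧ (π ^ (j + 1)) u ≠ v := by
    intro j hj
    refine ⟨hmmin j hj, ?_⟩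
    intro hveq
    exact h ⟨(j + 1 : ℕ), by rw [zpow_natCast]; exact hveq⟩
  have htraj : ∀ j : ℕ, j ≤ m → (π' ^ (j + 1)) v = (π ^ (j + 1)) u := by
    intro j
    induction j with
    | zero =>
      intro _
      simpa using hπ'v
    | succ j ih =>
      intro hjm
      have hj : j < m := by omega
      have hprev := ih (by omega)
      have hne := hpt_ne j hj
      have hswap : Equiv.swap u v ((π ^ (j + 1)) u) = (π ^ (j + 1)) u :=
        Equiv.swap_apply_of_ne_of_ne hne.1 hne.2
      calc (π' ^ (j + 1 + 1)) v = π' ((π' ^ (j + 1)) v) := by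
            rw [pow_succ', Equiv.Perm.mul_apply]
        _ = π' ((π ^ (j + 1)) u) := by rw [hprev]
        _ = π ((π ^ (j + 1)) u) := by rw [hπ', Equiv.Perm.mul_apply, hswap]
        _ = (π ^ (j + 1 + 1)) u := by rw [← Equiv.Perm.mul_apply, ← pow_succ']
  have : (π' ^ (m + 1)) v = u := by
    rw [htraj m le_rfl, hmu]
  exact Equiv.Perm.SameCycle.symm (⟨((m + 1 : ℕ) : ℤ), by
    rw [zpow_natCast]
    exact this⟩ : Equiv.Perm.SameCycle π' v u)

lemma nc_cycS_mul_swap_of_sameCycle [Finite Y] {π : Equiv.Perm Y} {u v : Y}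
    (huv : u ≠ v) (h : π.SameCycle u v) :
    nc (cycS (π * Equiv.swap u v)) = nc (cycS π) + 1 := by
  set π' := π * Equiv.swap u v with hπ'
  have hA : ¬ π'.SameCycle u v := not_sameCycle_swap_of_sameCycle huv h
  have hππ' : π = π' * Equiv.swap u v := by
    rw [hπ', mul_assoc, Equiv.swap_mul_self, mul_one]
  have h1 : cycS π' ≤ cycS π := by
    have h2 := cycS_mul_swap_le π u v
    rwa [sup_pairS_of_rel (cycS_rel.mpr h)] at h2
  have h2 : cycS π ≤ cycS π' ⊔ pairS u v := by
    have := cycS_mul_swap_le π' u v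
    rwa [← hππ'] at this
  have h3 : cycS π' ⊔ pairS u v ≤ cycS π :=
    sup_le h1 (pairS_le_of_rel (cycS_rel.mpr h))
  have heq : cycS π = cycS π' ⊔ pairS u v := le_antisymm h2 h3
  have hcount : nc (cycS π' ⊔ pairS u v) + 1 = nc (cycS π') :=
    nc_sup_pairS_of_not_rel (fun hc => hA (cycS_rel.mp hc))
  rw [heq] at *
  omega

lemma nc_cycS_mul_swap_of_not_sameCycle [Finite Y] {π : Equiv.Perm Y} {u v : Y}
    (huv : u ≠ v) (h : ¬ π.SameCycle u v) :
    nc (cycS (π * Equiv.swap u v)) + 1 = nc (cycS π) := by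
  have hB : (π * Equiv.swap u v).SameCycle u v := sameCycle_swap_of_not_sameCycle h
  have := nc_cycS_mul_swap_of_sameCycle (π := π * Equiv.swap u v) huv hB
  rw [mul_assoc, Equiv.swap_mul_self, mul_one] at this
  omega

lemma nc_cycS_mul_swap_le [Finite Y] (π : Equiv.Perm Y) (u v : Y) :
    nc (cycS (π * Equiv.swap u v)) ≤ nc (cycS π) + 1 := by
  rcases eq_or_ne u v with rfl | huv
  · rw [Equiv.swap_self]
    have : π * (Equiv.refl Y : Equiv.Perm Y) = π := mul_one π
    rw [this]
    omega
  · by_cases h : π.SameCycle u v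
    · exact le_of_eq (nc_cycS_mul_swap_of_sameCycle huv h)
    · have := nc_cycS_mul_swap_of_not_sameCycle huv h
      omega

end SwapCycle

section Genus

variable {Y : Type*}

open Equiv

lemma cycS_mul_le (σ τ : Equiv.Perm Y) : cycS (σ * τ) ≤ cycS σ ⊔ cycS τ := by
  apply cycS_le_of_rel_apply
  intro z
  have h1 : (cycS σ ⊔ cycS τ) z (τ z) := (le_sup_right : cycS τ ≤ _) (cycS_rel_apply τ z)
  have h2 : (cycS σ ⊔ cycS τ) (τ z) (σ (τ z)) := (le_sup_left : cycS σ ≤ _) (cycS_rel_apply σ _)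
  have := Setoid.trans' _ h1 h2
  rwa [Equiv.Perm.mul_apply]

/-- The genus inequality for a pair of permutations of a finite set. -/
lemma genus_ineq [Finite Y] (σ τ : Equiv.Perm Y) :
    nc (cycS σ) + nc (cycS τ) + nc (cycS (σ * τ))
      ≤ Nat.card Y + 2 * nc (cycS σ ⊔ cycS τ) := by
  have main : ∀ (m : ℕ) (τ σ : Equiv.Perm Y), Nat.card Y - nc (cycS τ) ≤ m →
      nc (cycS σ) + nc (cycS τ) + nc (cycS (σ * τ))
        ≤ Nat.card Y + 2 * nc (cycS σ ⊔ cycS τ) := by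
    intro m
    induction m with
    | zero =>
      intro τ σ hm
      have hτcard : nc (cycS τ) = Nat.card Y :=
        le_antisymm (nc_le_card _) (by omega)
      have hbot : (⊥ : Setoid Y) = cycS τ :=
        setoid_eq_of_le_of_nc_le bot_le (by rw [nc_bot, hτcard])
      have hτ1 : τ = 1 := by
        ext z
        have h1 : cycS τ z (τ z) := cycS_rel_apply τ z
        rw [← hbot] at h1
        have h2 : z = τ z := h1
        simp [← h2]
      subst hτ1
      rw [mul_one, cycS_one, sup_bot_eq, nc_bot]
      omega
    | succ m ih =>
      intro τ σ hm
      by_cases hfix : ∀ z, τ z = z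
      · have hτ1 : τ = 1 := Equiv.ext hfix
        subst hτ1
        rw [mul_one, cycS_one, sup_bot_eq, nc_bot]
        omega
      · push_neg at hfix
        obtain ⟨a, ha⟩ := hfix
        set b := τ a with hb
        have hab : a ≠ b := fun h => ha h.symm
        set τ' := Equiv.swap a b * τ with hτ'def
        have hτ'a : τ' a = a := by
          rw [hτ'def, Equiv.Perm.mul_apply, ← hb, Equiv.swap_apply_right]
        have hτinva : τ⁻¹ a ≠ a := by
          intro hc
          have h2 := congrArg τ hc
          rw [perm_apply_inv_self] at h2
          exact ha h2.symm
        have hf1 : τ' = τ * Equiv.swap (τ⁻¹ a) a := by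
          have hswap := Equiv.swap_apply_apply τ (τ⁻¹ a) a
          rw [perm_apply_inv_self, ← hb] at hswap
          rw [hτ'def, hswap]
          group
        have hscτ : τ.SameCycle (τ⁻¹ a) a := ⟨1, by simp⟩
        have hF1 : nc (cycS τ') = nc (cycS τ) + 1 := by
          rw [hf1]
          exact nc_cycS_mul_swap_of_sameCycle hτinva hscτ
        set w := τ'⁻¹ b with hwdef
        have hτ'w : τ' w = b := by rw [hwdef, perm_apply_inv_self]
        have haw : a ≠ w := by
          intro hc
          rw [← hc, hτ'a] at hτ'w
          exact hab hτ'w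
        have hf2 : τ = τ' * Equiv.swap a w := by
          have hswap := Equiv.swap_apply_apply τ' a w
          rw [hτ'a, hτ'w] at hswap
          have h2 : Equiv.swap a b * τ' = τ' * Equiv.swap a w := by
            rw [hswap]
            group
          rw [← h2, hτ'def, ← mul_assoc, Equiv.swap_mul_self, one_mul]
        have hστ : σ * τ = (σ * τ') * Equiv.swap a w := by
          rw [hf2, ← mul_assoc]
        have hτ'leτ : cycS τ' ≤ cycS τ := by
          rw [hf1]
          have h2 := cycS_mul_swap_le τ (τ⁻¹ a) a
          rwa [sup_pairS_of_rel (cycS_rel.mpr hscτ)] at h2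
        have hτleτ' : cycS τ ≤ cycS τ' ⊔ pairS a w := by
          rw [hf2]
          exact cycS_mul_swap_le τ' a w
        have hJ'J : cycS σ ⊔ cycS τ' ≤ cycS σ ⊔ cycS τ :=
          sup_le le_sup_left (hτ'leτ.trans le_sup_right)
        have hJab : (cycS σ ⊔ cycS τ) a b := by
          have := cycS_rel_apply τ a
          rw [← hb] at this
          exact (le_sup_right : cycS τ ≤ _) this
        have hJ'wb : (cycS σ ⊔ cycS τ') w b := by
          have := cycS_rel_apply τ' w
          rw [hτ'w] at this
          exact (le_sup_right : cycS τ' ≤ _) this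
        have hJle : cycS σ ⊔ cycS τ ≤ (cycS σ ⊔ cycS τ') ⊔ pairS a w := by
          refine sup_le ((le_sup_left : cycS σ ≤ cycS σ ⊔ cycS τ').trans le_sup_left) ?_
          exact hτleτ'.trans (sup_le_sup_right le_sup_right _)
        have hmeasure : Nat.card Y - nc (cycS τ') ≤ m := by
          have := nc_le_card (Y := Y) (cycS τ')
          omega
        have ihr := ih τ' σ hmeasure
        by_cases hcase : (cycS σ ⊔ cycS τ') a b
        · have hJ'aw : (cycS σ ⊔ cycS τ') a w :=
            Setoid.trans' _ hcase (Setoid.symm' _ hJ'wb)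
          have hJeqJ' : cycS σ ⊔ cycS τ = cycS σ ⊔ cycS τ' := by
            apply le_antisymm
            · refine hJle.trans ?_
              rw [sup_pairS_of_rel hJ'aw]
            · exact hJ'J
          have hbound := nc_cycS_mul_swap_le (σ * τ') a w
          rw [← hστ] at hbound
          rw [hJeqJ']
          omega
        · have hnotSC : ¬ (σ * τ').SameCycle a w := by
            intro hsc
            have h1 : (cycS σ ⊔ cycS τ') a w := (cycS_mul_le σ τ') (cycS_rel.mpr hsc)
            exact hcase (Setoid.trans' _ h1 hJ'wb)
          have hF2 : nc (cycS (σ * τ)) + 1 = nc (cycS (σ * τ')) := by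
            rw [hστ]
            exact nc_cycS_mul_swap_of_not_sameCycle haw hnotSC
          have hJeq : cycS σ ⊔ cycS τ = (cycS σ ⊔ cycS τ') ⊔ pairS a b := by
            apply le_antisymm
            · refine hJle.trans (sup_le le_sup_left (pairS_le_of_rel ?_))
              exact Setoid.trans' _
                ((le_sup_right : pairS a b ≤ _) (pairS_rel_left_right a b))
                ((le_sup_left : cycS σ ⊔ cycS τ' ≤ _) (Setoid.symm' _ hJ'wb))
            · exact sup_le hJ'J (pairS_le_of_rel hJab)
          have hncJ : nc ((cycS σ ⊔ cycS τ') ⊔ pairS a b) + 1 = nc (cycS σ ⊔ cycS τ') :=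
            nc_sup_pairS_of_not_rel hcase
          rw [hJeq]
          omega
  exact main (Nat.card Y) τ σ (Nat.sub_le _ _)

end Genus

section Involutions

variable {Y : Type*}

open Equiv

lemma zpow_invol {G : Type*} [Group G] {g : G} (h : g * g = 1) (n : ℤ) :
    g ^ n = 1 ∨ g ^ n = g := by
  have h2 : g ^ (2 : ℤ) = 1 := by
    rw [show (2 : ℤ) = 1 + 1 by norm_num, zpow_add, zpow_one, h]
  rcases Int.even_or_odd n with ⟨m, hm⟩ | ⟨m, hm⟩
  · left
    rw [hm, show m + m = 2 * m by ring, zpow_mul, h2, one_zpow]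
  · right
    rw [hm, zpow_add, zpow_mul, h2, one_zpow, one_mul, zpow_one]

lemma sameCycle_invol {π : Equiv.Perm Y} (h : π * π = 1) {x y : Y}
    (hsc : π.SameCycle x y) : y = x ∨ y = π x := by
  obtain ⟨n, rfl⟩ := hsc
  rcases zpow_invol h n with h1 | h1 <;> rw [h1]
  · exact Or.inl (Equiv.Perm.one_apply x)
  · exact Or.inr rfl

lemma inv_eq_self_of_invol {G : Type*} [Group G] {g : G} (h : g * g = 1) : g⁻¹ = g :=
  (eq_inv_of_mul_eq_one_left h).symm

lemma conj_zpow_of_invol {G : Type*} [Group G] {g σ : G} (hg : g * g = 1)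
    (hc : g * σ * g = σ⁻¹) (n : ℤ) : g * σ ^ n = σ ^ (-n) * g := by
  have hginv : g⁻¹ = g := inv_eq_self_of_invol hg
  have h1 : g * σ * g⁻¹ = σ⁻¹ := by rw [hginv]; exact hc
  have h2 : (g * σ * g⁻¹) ^ n = g * σ ^ n * g⁻¹ := conj_zpow
  rw [h1] at h2
  have h3 : σ⁻¹ ^ n = σ ^ (-n) := by rw [zpow_neg, inv_zpow]
  rw [h3] at h2
  rw [h2]
  group

lemma sameCycle_conj_invol {π g : Equiv.Perm Y} (hg : g * g = 1) (hc : g * π * g = π⁻¹)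
    {u v : Y} (h : π.SameCycle u v) : π.SameCycle (g u) (g v) := by
  obtain ⟨n, rfl⟩ := h
  refine ⟨-n, ?_⟩
  have hperm := conj_zpow_of_invol hg hc n
  have happ := congrArg (fun (ρ : Equiv.Perm Y) => ρ u) hperm
  simp only [Equiv.Perm.mul_apply] at happ
  exact happ.symm

/-- For fixed-point-free involutions, each joint class consists of exactly two cycles of
the product, giving the factor `2` in the cycle count. -/
lemma nc_cycS_mul_invol [Finite Y] {π₁ π₂ : Equiv.Perm Y}
    (h₁ : π₁ * π₁ = 1) (h₂ : π₂ * π₂ = 1)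
    (hf₁ : ∀ z, π₁ z ≠ z) (hf₂ : ∀ z, π₂ z ≠ z) :
    nc (cycS (π₁ * π₂)) = 2 * nc (cycS π₁ ⊔ cycS π₂) := by
  set σ := π₁ * π₂ with hσ
  have hππ : ∀ z, π₁ (π₁ z) = z := fun z => by
    have := congrArg (fun (ρ : Equiv.Perm Y) => ρ z) h₁
    simpa using this
  have hππ₂ : ∀ z, π₂ (π₂ z) = z := fun z => by
    have := congrArg (fun (ρ : Equiv.Perm Y) => ρ z) h₂
    simpa using this
  have hconj : π₂ * σ * π₂ = σ⁻¹ := by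
    rw [hσ]
    have hinv1 : π₁⁻¹ = π₁ := inv_eq_self_of_invol h₁
    have hinv2 : π₂⁻¹ = π₂ := inv_eq_self_of_invol h₂
    rw [mul_inv_rev, hinv1, hinv2]
    calc π₂ * (π₁ * π₂) * π₂ = π₂ * π₁ * (π₂ * π₂) := by group
      _ = π₂ * π₁ := by rw [h₂, mul_one]
  have htrans : ∀ {u v : Y}, σ.SameCycle u v → σ.SameCycle (π₂ u) (π₂ v) :=
    fun h => sameCycle_conj_invol h₂ hconj h
  -- no point is on the same σ-cycle as its π₂-image
  have hkey : ∀ x : Y, ¬ σ.SameCycle x (π₂ x) := by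
    intro x ⟨n, hn⟩
    rcases Int.even_or_odd n with ⟨m, hm⟩ | ⟨m, hm⟩
    · -- n = 2m : π₂ fixes σ^m x
      apply hf₂ ((σ ^ m) x)
      have hsplit : (σ ^ m) ((σ ^ m) x) = π₂ x := by
        rw [← Equiv.Perm.mul_apply, ← zpow_add, ← hm, hn]
      have hc2 := conj_zpow_of_invol h₂ hconj m
      have happ := congrArg (fun (ρ : Equiv.Perm Y) => ρ x) hc2
      simp only [Equiv.Perm.mul_apply] at happ
      -- happ : π₂ ((σ ^ m) x) = (σ ^ (-m)) (π₂ x)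
      rw [happ, ← hsplit]
      have hcomp : σ ^ (-m) * σ ^ m * σ ^ m = σ ^ m := by group
      have happ2 := congrArg (fun (ρ : Equiv.Perm Y) => ρ x) hcomp
      simp only [Equiv.Perm.mul_apply] at happ2
      exact happ2
    · -- n = 2m + 1 : π₁ fixes σ^(m+1) x
      apply hf₁ ((σ ^ (m + 1)) x)
      have hπ₁σ : π₁ = σ * π₂ := by
        rw [hσ, mul_assoc, h₂, mul_one]
      have hc2 := conj_zpow_of_invol h₂ hconj (m + 1)
      have happ := congrArg (fun (ρ : Equiv.Perm Y) => ρ x) hc2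
      simp only [Equiv.Perm.mul_apply] at happ
      -- happ : π₂ ((σ ^ (m+1)) x) = (σ ^ (-(m+1))) (π₂ x)
      rw [hπ₁σ, Equiv.Perm.mul_apply, happ, ← hn]
      have hcomp : σ * σ ^ (-(m + 1)) * σ ^ n = σ ^ (m + 1) := by
        rw [hm]; group
      have happ2 := congrArg (fun (ρ : Equiv.Perm Y) => ρ x) hcomp
      simp only [Equiv.Perm.mul_apply] at happ2
      exact happ2
  -- the setoid with classes "cycle of x together with cycle of π₂ x"
  set R : Setoid Y :=
    ⟨fun x y => σ.SameCycle x y ∨ σ.SameCycle (π₂ x) y,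
      ⟨fun x => Or.inl (Equiv.Perm.SameCycle.refl σ x), by
        rintro x y (h | h)
        · exact Or.inl h.symm
        · right
          have := htrans h.symm   -- SameCycle (π₂ y) (π₂ (π₂ x))
          rwa [hππ₂ x] at this, by
        rintro x y z (h | h) (h' | h')
        · exact Or.inl (h.trans h')
        · exact Or.inr ((htrans h).trans h')
        · exact Or.inr (h.trans h')
        · left
          have h2 := htrans h   -- SameCycle (π₂ (π₂ x)) (π₂ y)
          rw [hππ₂ x] at h2
          exact h2.trans h'⟩⟩ with hR
  have hJleR : cycS π₁ ⊔ cycS π₂ ≤ R := by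
    apply sup_le
    · intro x y hxy
      rcases sameCycle_invol h₁ hxy with h1 | h1 <;> rw [h1]
      · right
        refine ⟨1, ?_⟩
        rw [zpow_one, hσ, Equiv.Perm.mul_apply, hππ₂]
    · intro x y hxy
      rcases sameCycle_invol h₂ hxy with h1 | h1 <;> rw [h1]
      · exact Or.inr (Equiv.Perm.SameCycle.refl σ (π₂ x))
  have hle : cycS σ ≤ cycS π₁ ⊔ cycS π₂ := by
    rw [hσ]
    exact cycS_mul_le π₁ π₂
  apply card_eq_two_mul_of_fibers (qmap hle)
  intro c
  obtain ⟨x, rfl⟩ := Quotient.exists_rep c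
  refine ⟨Quotient.mk _ x, Quotient.mk _ (π₂ x), ?_, ?_⟩
  · intro hc
    exact hkey x (Quotient.eq.mp hc)
  · intro aq
    obtain ⟨z, rfl⟩ := Quotient.exists_rep aq
    rw [qmap_mk]
    constructor
    · intro hz
      have hJ := Quotient.eq.mp hz
      rcases hJleR hJ with h | h
      · exact Or.inl (Quotient.sound h)
      · right
        apply Quotient.sound
        have h2 := htrans h
        rw [hππ₂ z] at h2
        exact h2
    · rintro (hz | hz)
      · exact Quotient.sound (hle (Quotient.eq.mp hz))
      · have hz' : cycS σ z (π₂ x) := Quotient.eq.mp hz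
        have hx : (cycS π₁ ⊔ cycS π₂) (π₂ x) x := by
          refine (le_sup_right : cycS π₂ ≤ _) ?_
          refine ⟨1, ?_⟩
          rw [zpow_one, hππ₂]
        exact Quotient.sound (Setoid.trans' _ (hle hz') hx)

/-- The orbit-count bound: joint orbits of `π₁π₃` and `π₃π₂` are at most twice as many as
joint orbits of all three involutions. -/
lemma orb_le_two_mul [Finite Y] {π₁ π₂ π₃ : Equiv.Perm Y}
    (h₁ : π₁ * π₁ = 1) (h₂ : π₂ * π₂ = 1) (h₃ : π₃ * π₃ = 1) :
    nc (cycS (π₁ * π₃) ⊔ cycS (π₃ * π₂))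
      ≤ 2 * nc (cycS π₁ ⊔ cycS π₂ ⊔ cycS π₃) := by
  set σ := π₁ * π₃ with hσ
  set τ := π₃ * π₂ with hτ
  have happly : ∀ {ρ ρ' : Equiv.Perm Y}, ρ = ρ' → ∀ z, ρ z = ρ' z :=
    fun h z => congrArg (fun (ρ : Equiv.Perm Y) => ρ z) h
  have hππ₁ : ∀ z, π₁ (π₁ z) = z := fun z => by simpa using happly h₁ z
  have hππ₂ : ∀ z, π₂ (π₂ z) = z := fun z => by simpa using happly h₂ z
  have hππ₃ : ∀ z, π₃ (π₃ z) = z := fun z => by simpa using happly h₃ z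
  have hinv1 : π₁⁻¹ = π₁ := inv_eq_self_of_invol h₁
  have hinv2 : π₂⁻¹ = π₂ := inv_eq_self_of_invol h₂
  have hinv3 : π₃⁻¹ = π₃ := inv_eq_self_of_invol h₃
  have hconjσ : π₃ * σ * π₃ = σ⁻¹ := by
    rw [hσ, mul_inv_rev, hinv1, hinv3]
    calc π₃ * (π₁ * π₃) * π₃ = π₃ * π₁ * (π₃ * π₃) := by group
      _ = π₃ * π₁ := by rw [h₃, mul_one]
  have hconjτ : π₃ * τ * π₃ = τ⁻¹ := by
    rw [hτ, mul_inv_rev, hinv2, hinv3]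
    calc π₃ * (π₃ * π₂) * π₃ = (π₃ * π₃) * (π₂ * π₃) := by group
      _ = π₂ * π₃ := by rw [h₃, one_mul]
  set JH := cycS σ ⊔ cycS τ with hJH
  set J3 := cycS π₁ ⊔ cycS π₂ ⊔ cycS π₃ with hJ3
  have hπ₁J3 : cycS π₁ ≤ J3 := le_trans le_sup_left le_sup_left
  have hπ₂J3 : cycS π₂ ≤ J3 := le_trans le_sup_right le_sup_left
  have hπ₃J3 : cycS π₃ ≤ J3 := le_sup_right
  have hle : JH ≤ J3 := by
    apply sup_le
    · refine le_trans ?_ (le_refl J3)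
      apply cycS_le_of_rel_apply
      intro z
      have e1 : J3 z (π₃ z) := hπ₃J3 (cycS_rel_apply π₃ z)
      have e2 : J3 (π₃ z) (π₁ (π₃ z)) := hπ₁J3 (cycS_rel_apply π₁ _)
      have := Setoid.trans' _ e1 e2
      rwa [← Equiv.Perm.mul_apply, ← hσ] at this
    · apply cycS_le_of_rel_apply
      intro z
      have e1 : J3 z (π₂ z) := hπ₂J3 (cycS_rel_apply π₂ z)
      have e2 : J3 (π₂ z) (π₃ (π₂ z)) := hπ₃J3 (cycS_rel_apply π₃ _)
      have := Setoid.trans' _ e1 e2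
      rwa [← Equiv.Perm.mul_apply, ← hτ] at this
  -- transport of JH along π₃
  have hJHtrans : ∀ {u v : Y}, JH u v → JH (π₃ u) (π₃ v) := by
    intro u v h
    have hcomap : JH ≤ Setoid.comap π₃ JH := by
      apply sup_le
      · intro u v huv
        show JH (π₃ u) (π₃ v)
        exact (le_sup_left : cycS σ ≤ JH) (sameCycle_conj_invol h₃ hconjσ huv)
      · intro u v huv
        show JH (π₃ u) (π₃ v)
        exact (le_sup_right : cycS τ ≤ JH) (sameCycle_conj_invol h₃ hconjτ huv)
    exact hcomap h
  set R : Setoid Y :=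
    ⟨fun x y => JH x y ∨ JH (π₃ x) y,
      ⟨fun x => Or.inl (JH.refl' x), by
        rintro x y (h | h)
        · exact Or.inl (JH.symm' h)
        · right
          have := hJHtrans (JH.symm' h)   -- JH (π₃ y) (π₃ (π₃ x))
          rwa [hππ₃ x] at this, by
        rintro x y z (h | h) (h' | h')
        · exact Or.inl (JH.trans' h h')
        · exact Or.inr (JH.trans' (hJHtrans h) h')
        · exact Or.inr (JH.trans' h h')
        · left
          have h2 := hJHtrans h
          rw [hππ₃ x] at h2
          exact JH.trans' h2 h'⟩⟩ with hR
  have hJ3leR : J3 ≤ R := by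
    apply sup_le
    · apply sup_le
      · intro x y hxy
        rcases sameCycle_invol h₁ hxy with h1 | h1 <;> rw [h1]
        · right
          refine (le_sup_left : cycS σ ≤ JH) ⟨1, ?_⟩
          rw [zpow_one, hσ, Equiv.Perm.mul_apply, hππ₃]
      · intro x y hxy
        rcases sameCycle_invol h₂ hxy with h1 | h1 <;> rw [h1]
        · right
          apply JH.symm'
          refine (le_sup_right : cycS τ ≤ JH) ⟨1, ?_⟩
          rw [zpow_one, hτ, Equiv.Perm.mul_apply, hππ₂]
    · intro x y hxy
      rcases sameCycle_invol h₃ hxy with h1 | h1 <;> rw [h1]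
      · exact Or.inr (JH.refl' (π₃ x))
  apply card_le_two_mul_of_fibers (qmap hle)
  intro c
  obtain ⟨x, rfl⟩ := Quotient.exists_rep c
  refine ⟨Quotient.mk _ x, Quotient.mk _ (π₃ x), ?_⟩
  intro aq haq
  obtain ⟨z, rfl⟩ := Quotient.exists_rep aq
  rw [qmap_mk] at haq
  have hJ := Quotient.eq.mp haq
  rcases hJ3leR hJ with h | h
  · exact Or.inl (Quotient.sound h)
  · right
    apply Quotient.sound
    have h2 := hJHtrans h
    rwa [hππ₃ z] at h2

end Involutions

section BrauerAux

variable {Y : Type*}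

open Equiv

/-- A finite set carrying a fixed-point-free involution has even cardinality. -/
lemma even_ncard_of_invol [Finite Y] :
    ∀ (n : ℕ) (S : Set Y) (f : Y → Y), S.ncard = n → (∀ z, f (f z) = z) →
      (∀ z ∈ S, f z ≠ z) → (∀ z ∈ S, f z ∈ S) → Even n := by
  intro n
  induction n using Nat.strong_induction_on with
  | _ n ih =>
    intro S f hcard hinv hfp hmap
    rcases S.eq_empty_or_nonempty with rfl | ⟨a, ha⟩
    · rw [Set.ncard_empty] at hcard
      exact hcard ▸ Even.zero
    · have hfa : f a ∈ S := hmap a ha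
      have hane : f a ≠ a := hfp a ha
      have hsub : {a, f a} ⊆ S := by
        rintro z (rfl | rfl)
        · exact ha
        · exact hfa
      have hpair : ({a, f a} : Set Y).ncard = 2 := Set.ncard_pair (Ne.symm hane)
      have hS' : (S \ {a, f a}).ncard = n - 2 := by
        rw [Set.ncard_diff hsub, hpair, hcard]
      have hn2 : 2 ≤ n := by
        rw [← hcard, ← hpair]
        exact Set.ncard_le_ncard hsub S.toFinite
      have heven := ih (n - 2) (by omega) (S \ {a, f a}) f hS' hinv
        (fun z hz => hfp z hz.1)
        (by
          rintro z ⟨hzS, hz2⟩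
          have hz2' : ¬(z = a ∨ z = f a) := by
            simpa [Set.mem_insert_iff] using hz2
          refine ⟨hmap z hzS, ?_⟩
          intro hmem
          have hmem' : f z = a ∨ f z = f a := by
            simpa [Set.mem_insert_iff] using hmem
          rcases hmem' with h | h
          · exact hz2' (Or.inr (by rw [← hinv z, h]))
          · exact hz2' (Or.inl (by rw [← hinv z, h, hinv])))
      obtain ⟨m, hm⟩ := heven
      exact ⟨m + 1, by omega⟩

/-- Partner data for a Brauer partition: blocks are pairs `{x, f x}`. -/
lemma brauer_partner {p : Setoid Y} (hp : ∀ x : Y, Nat.card {y | p x y} = 2) :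
    ∃ f : Y → Y, (∀ x, f x ≠ x) ∧ (∀ x, f (f x) = x) ∧
      (∀ x y, p x y ↔ y = x ∨ y = f x) := by
  have hex : ∀ x : Y, ∃ y : Y, p x y ∧ y ≠ x ∧ ∀ z, p x z → z = x ∨ z = y := by
    intro x
    have h2 := hp x
    rw [Nat.card_eq_two_iff' (⟨x, p.refl' x⟩ : {y | p x y})] at h2
    obtain ⟨⟨y, hy⟩, hyne, hyuniq⟩ := h2
    refine ⟨y, hy, fun hc => hyne (Subtype.ext hc), ?_⟩
    intro z hz
    rcases eq_or_ne z x with rfl | hzx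
    · exact Or.inl rfl
    · right
      have huniq := hyuniq ⟨z, hz⟩ (fun hc => hzx (congrArg Subtype.val hc))
      exact congrArg Subtype.val huniq
  choose f hf1 hf2 hf3 using hex
  have hinv : ∀ x, f (f x) = x := by
    intro x
    have h1 : p (f x) x := p.symm' (hf1 x)
    rcases hf3 (f x) x h1 with h | h
    · exact absurd h.symm (hf2 x)
    · exact h.symm
  refine ⟨f, hf2, hinv, ?_⟩
  intro x y
  constructor
  · intro h
    rcases eq_or_ne y x with rfl | hyx
    · exact Or.inl rfl
    · rcases hf3 x y h with h' | h'
      · exact absurd h' hyx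
      · exact Or.inr h'
  · rintro (rfl | rfl)
    · exact p.refl' y
    · exact hf1 x

/-- The permutation associated with a fixed-point-free pairing. -/
def pairingPerm (f : Y → Y) (hinv : ∀ x, f (f x) = x) : Equiv.Perm Y :=
  ⟨f, f, fun x => hinv x, fun x => hinv x⟩

lemma pairingPerm_apply (f : Y → Y) (hinv : ∀ x, f (f x) = x) (x : Y) :
    pairingPerm f hinv x = f x := rfl

lemma pairingPerm_invol (f : Y → Y) (hinv : ∀ x, f (f x) = x) :
    pairingPerm f hinv * pairingPerm f hinv = 1 := by
  ext x
  simp [pairingPerm, hinv x]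

lemma cycS_pairingPerm {p : Setoid Y} {f : Y → Y} (hinv : ∀ x, f (f x) = x)
    (hcls : ∀ x y, p x y ↔ y = x ∨ y = f x) :
    cycS (pairingPerm f hinv) = p := by
  ext x y
  constructor
  · intro h
    rcases sameCycle_invol (pairingPerm_invol f hinv) h with h1 | h1 <;> rw [h1]
    · exact (hcls x (f x)).mpr (Or.inr rfl)
  · intro h
    rcases (hcls x y).mp h with h1 | h1 <;> rw [h1]
    · exact ⟨1, by rw [zpow_one]; rfl⟩

lemma nc_brauer [Finite Y] {p : Setoid Y} {f : Y → Y}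
    (hfp : ∀ x, f x ≠ x) (hcls : ∀ x y, p x y ↔ y = x ∨ y = f x) :
    Nat.card Y = 2 * nc p := by
  apply card_eq_two_mul_of_fibers (Quotient.mk p)
  intro c
  obtain ⟨x, rfl⟩ := Quotient.exists_rep c
  refine ⟨x, f x, (hfp x).symm, ?_⟩
  intro a
  rw [Quotient.eq]
  constructor
  · intro h
    rcases (hcls x a).mp (p.symm' h) with rfl | rfl
    · exact Or.inl rfl
    · exact Or.inr rfl
  · rintro (rfl | rfl)
    · exact p.refl' a
    · exact p.symm' ((hcls x (f x)).mpr (Or.inr rfl))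

end BrauerAux

section IdkAux

variable {k : ℕ}

/-- The involution exchanging the two rows. -/
def rowSwap (k : ℕ) : Equiv.Perm (Fin k ⊕ Fin k) := Equiv.sumComm (Fin k) (Fin k)

lemma rowSwap_invol : rowSwap k * rowSwap k = 1 := by
  ext x
  cases x <;> rfl

lemma rowSwap_fpf : ∀ z : Fin k ⊕ Fin k, rowSwap k z ≠ z := by
  rintro (i | i) <;> simp [rowSwap]

lemma idk_rel_iff {x y : Fin k ⊕ Fin k} :
    idk k x y ↔ Sum.elim id id x = Sum.elim id id y := Iff.rfl

lemma idk_cls : ∀ x y : Fin k ⊕ Fin k, idk k x y ↔ y = x ∨ y = rowSwap k x := by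
  rintro (i | i) (j | j) <;>
    simp [idk_rel_iff, rowSwap, eq_comm]

lemma rowSwap_invol_apply : ∀ x : Fin k ⊕ Fin k, rowSwap k (rowSwap k x) = x := by
  rintro (i | i) <;> rfl

lemma cycS_rowSwap : cycS (rowSwap k) = idk k := by
  have heq : pairingPerm (fun z => rowSwap k z) rowSwap_invol_apply = rowSwap k := by
    ext x; rfl
  rw [← heq]
  exact cycS_pairingPerm rowSwap_invol_apply idk_cls

lemma nc_idk : nc (idk k) = k := by
  have hsurj : Function.Surjective (Sum.elim id id : Fin k ⊕ Fin k → Fin k) :=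
    fun i => ⟨Sum.inl i, rfl⟩
  have := Nat.card_congr (Setoid.quotientKerEquivOfSurjective _ hsurj)
  simpa [nc, idk] using this

end IdkAux

section SplitAux

variable {Y : Type*}

/-- The partition obtained from `p` by splitting a block `{x, y}` of `p` into two
singletons. -/
def splitS (p : Setoid Y) (x y : Y) : Setoid Y :=
  ⟨fun a b => p a b ∧ (a = x ↔ b = x) ∧ (a = y ↔ b = y),
    ⟨fun a => ⟨p.refl' a, Iff.rfl, Iff.rfl⟩,
      fun h => ⟨p.symm' h.1, h.2.1.symm, h.2.2.symm⟩,
      fun h h' => ⟨p.trans' h.1 h'.1, h.2.1.trans h'.2.1, h.2.2.trans h'.2.2⟩⟩⟩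

lemma splitS_le (p : Setoid Y) (x y : Y) : splitS p x y ≤ p := fun _ _ h => h.1

lemma le_splitS {q p : Setoid Y} {x y : Y} (hqp : q ≤ p) (hnq : ¬ q x y) (hpxy : p x y)
    (hcls : ∀ z, p x z → z = x ∨ z = y) : q ≤ splitS p x y := by
  have hclsy : ∀ z, p y z → z = x ∨ z = y := fun z hz => hcls z (p.trans' hpxy hz)
  intro a b hab
  refine ⟨hqp hab, ?_, ?_⟩
  · constructor
    · rintro rfl
      rcases hcls b (hqp hab) with rfl | rfl
      · rfl
      · exact absurd hab hnq
    · rintro rfl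
      rcases hcls a (p.symm' (hqp hab)) with rfl | rfl
      · rfl
      · exact absurd (q.symm' hab) hnq
  · constructor
    · rintro rfl
      rcases hclsy b (hqp hab) with rfl | rfl
      · exact absurd (q.symm' hab) hnq
      · rfl
    · rintro rfl
      rcases hclsy a (p.symm' (hqp hab)) with rfl | rfl
      · exact absurd hab hnq
      · rfl

lemma splitS_not_rel {p : Setoid Y} {x y : Y} (hxy : x ≠ y) : ¬ splitS p x y x y := by
  rintro ⟨-, h, -⟩
  exact hxy (h.mp rfl).symm

lemma nc_splitS [Finite Y] {p : Setoid Y} {x y : Y} (hxy : x ≠ y) (hpxy : p x y)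
    (hcls : ∀ z, p x z → z = x ∨ z = y) :
    nc (splitS p x y) = nc p + 1 := by
  have hle : splitS p x y ≤ p := splitS_le p x y
  apply card_eq_add_one_of_fibers (qmap hle) (Quotient.mk p x)
  · intro b hb
    obtain ⟨u, rfl⟩ := Quotient.exists_rep b
    have hux : ¬ p u x := fun hc => hb (Quotient.sound hc)
    refine ⟨Quotient.mk _ u, fun a' => ?_⟩
    obtain ⟨z, rfl⟩ := Quotient.exists_rep a'
    rw [qmap_mk]
    constructor
    · intro hz
      have hpzu : p z u := Quotient.eq.mp hz
      apply Quotient.sound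
      refine ⟨hpzu, ?_, ?_⟩
      · constructor
        · intro hc
          rw [hc] at hpzu
          exact absurd (p.symm' hpzu) hux
        · intro hc
          have hpux : p u x := by rw [hc]
          exact absurd hpux hux
      · constructor
        · intro hc
          rw [hc] at hpzu
          exact absurd (p.symm' (p.trans' hpxy hpzu)) hux
        · intro hc
          have hpux : p u x := by rw [hc]; exact p.symm' hpxy
          exact absurd hpux hux
    · intro hz
      exact Quotient.sound (hle (Quotient.eq.mp hz))
  · refine ⟨Quotient.mk _ x, Quotient.mk _ y, ?_, ?_⟩
    · intro hc
      exact splitS_not_rel hxy (Quotient.eq.mp hc)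
    · intro a
      obtain ⟨z, rfl⟩ := Quotient.exists_rep a
      rw [qmap_mk]
      constructor
      · intro hz
        have hpzx : p z x := Quotient.eq.mp hz
        rcases hcls z (p.symm' hpzx) with rfl | rfl
        · exact Or.inl rfl
        · exact Or.inr rfl
      · rintro (hz | hz)
        · have : splitS p x y z x := Quotient.eq.mp hz
          exact Quotient.sound this.1
        · have hzy : splitS p x y z y := Quotient.eq.mp hz
          exact Quotient.sound (p.trans' hzy.1 (p.symm' hpxy))
  
end SplitAux

section MainAux

variable {k : ℕ}

/-- Invariants along admissible split chains. -/
lemma sp_invariant {b p q : Pk k} (h : q ∈ Sp b p) :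
    q ≤ p ∧ nc q + nc (p ⊔ b) = nc p + nc (q ⊔ b) := by
  induction h with
  | refl => exact ⟨le_rfl, rfl⟩
  | tail _ hstep ih =>
    obtain ⟨h1, h2, h3⟩ := hstep
    exact ⟨h1.trans ih.1, by omega⟩

lemma card_two_rows : Nat.card (Fin k ⊕ Fin k) = k + k := by
  simp [Nat.card_eq_fintype_card]

/-- Splitting a pair block of a Brauer partition does not change the join with `idk`. -/
lemma brauer_split_join {p : Pk k} {f : Fin k ⊕ Fin k → Fin k ⊕ Fin k}
    (hfp : ∀ x, f x ≠ x) (hinv : ∀ x, f (f x) = x)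
    (hcls : ∀ x y, p x y ↔ y = x ∨ y = f x) (x : Fin k ⊕ Fin k) :
    splitS p x (f x) ⊔ idk k = p ⊔ idk k := by
  set y := f x with hy
  set p1 := splitS p x y with hp1
  set r := p1 ⊔ idk k with hr
  have hidkr : idk k ≤ r := le_sup_right
  have hp1r : p1 ≤ r := le_sup_left
  apply le_antisymm
  · exact sup_le ((splitS_le p x y).trans le_sup_left) le_sup_right
  · -- p ⊔ idk ≤ r ; enough : p ≤ r
    refine sup_le ?_ hidkr
    -- key : r x y
    have hkey : r x y := by
      by_contra hne
      set S : Set (Fin k ⊕ Fin k) := {z | r x z} with hS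
      have hxS : x ∈ S := r.refl' x
      have hyS : y ∉ S := hne
      have hg : ∀ z ∈ S, rowSwap k z ∈ S := by
        intro z hz
        have : idk k z (rowSwap k z) := (idk_cls z (rowSwap k z)).mpr (Or.inr rfl)
        exact r.trans' hz (hidkr this)
      have hf : ∀ z ∈ S \ {x}, f z ∈ S \ {x} := by
        rintro z ⟨hzS, hzx⟩
        have hzx' : z ≠ x := hzx
        have hzy : z ≠ y := fun hc => hyS (hc ▸ hzS)
        have hzfx : f z ≠ x := by
          intro hc
          apply hzy
          rw [← hinv z, hc]
        have hsplit : p1 z (f z) := by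
          refine ⟨(hcls z (f z)).mpr (Or.inr rfl), ?_, ?_⟩
          · exact ⟨fun hc => absurd hc hzx', fun hc => absurd hc hzfx⟩
          · constructor
            · intro hc
              exact absurd hc hzy
            · intro hc
              -- f z = y = f x → z = x
              exact absurd (by rw [← hinv z, hc, hy, hinv]) hzx'
        exact ⟨r.trans' hzS (hp1r hsplit), hzfx⟩
      -- parity contradiction
      have hSfin : S.ncard = S.ncard := rfl
      have heven1 : Even S.ncard :=
        even_ncard_of_invol S.ncard S (fun z => rowSwap k z) rfl rowSwap_invol_apply
          (fun z _ => rowSwap_fpf z) hg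
      have heven2 : Even (S \ {x}).ncard :=
        even_ncard_of_invol _ (S \ {x}) f rfl hinv (fun z _ => hfp z) hf
      have hcard : (S \ {x}).ncard = S.ncard - 1 := Set.ncard_diff_singleton_of_mem hxS
      have hpos : 0 < S.ncard := (Set.ncard_pos S.toFinite).mpr ⟨x, hxS⟩
      obtain ⟨m1, hm1⟩ := heven1
      obtain ⟨m2, hm2⟩ := heven2
      omega
    -- now p ≤ r
    intro a b hab
    rcases (hcls a b).mp hab with h1 | h1
    · rw [h1]
    rw [h1]
    rcases eq_or_ne a x with hax | hax
    · rw [hax]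
      exact hkey
    rcases eq_or_ne a y with hay | hay
    · rw [hay]
      have hfy : f y = x := by rw [hy, hinv]
      rw [hfy]
      exact r.symm' hkey
    · have hsplit : p1 a (f a) := by
        refine ⟨(hcls a (f a)).mpr (Or.inr rfl), ?_, ?_⟩
        · constructor
          · intro hc
            exact absurd hc hax
          · intro hc
            exact absurd (show a = y by rw [hy, ← hc, hinv]) hay
        · constructor
          · intro hc
            exact absurd hc hay
          · intro hc
            exact absurd (show a = x by rw [← hinv a, hc, hy, hinv]) hax
      exact hp1r hsplit

end MainAux


/-- For any `p ∈ P_k`, the set `Sp(p) ∩ B_k` of admissible splits of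
`p` (base `id_k`) that are Brauer partitions has at most one element; in particular
`Sp(p) = {p}` for any Brauer partition `p`. -/
theorem statement11 (k : ℕ) (hk : 0 < k) :
    (∀ p : Pk k, (Sp (idk k) p ∩ Bk k).Subsingleton) ∧
    (∀ p ∈ Bk k, Sp (idk k) p = {p}) := by
  constructor
  · intro p q hq q' hq'
    obtain ⟨hqSp, hqB⟩ := hq
    obtain ⟨hq'Sp, hq'B⟩ := hq'
    obtain ⟨f, hf_fp, hf_inv, hf_cls⟩ := brauer_partner hqB
    obtain ⟨f', hf'_fp, hf'_inv, hf'_cls⟩ := brauer_partner hq'B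
    set α := pairingPerm f hf_inv with hα
    set β := pairingPerm f' hf'_inv with hβ
    have hα2 : α * α = 1 := pairingPerm_invol f hf_inv
    have hβ2 : β * β = 1 := pairingPerm_invol f' hf'_inv
    have hαfp : ∀ z, α z ≠ z := fun z => hf_fp z
    have hβfp : ∀ z, β z ≠ z := fun z => hf'_fp z
    have hcycα : cycS α = q := cycS_pairingPerm hf_inv hf_cls
    have hcycβ : cycS β = q' := cycS_pairingPerm hf'_inv hf'_cls
    have hγ2 : rowSwap k * rowSwap k = 1 := rowSwap_invol
    have hγfp : ∀ z : Fin k ⊕ Fin k, rowSwap k z ≠ z := rowSwap_fpf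
    have hcycγ : cycS (rowSwap k) = idk k := cycS_rowSwap
    obtain ⟨hqp, hqe⟩ := sp_invariant hqSp
    obtain ⟨hq'p, hq'e⟩ := sp_invariant hq'Sp
    have hqr : q ≤ q ⊔ q' := le_sup_left
    have hq'r : q' ≤ q ⊔ q' := le_sup_right
    have hrp : q ⊔ q' ≤ p := sup_le hqp hq'p
    have m1 := nc_mono (idk k) hqr
    have m1' := nc_mono (idk k) hq'r
    have m2 := nc_mono (idk k) hrp
    have hgen := genus_ineq (α * rowSwap k) (rowSwap k * β)
    have hprod : (α * rowSwap k) * (rowSwap k * β) = α * β := by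
      rw [mul_assoc, ← mul_assoc (rowSwap k), rowSwap_invol, one_mul]
    have t1 : nc (cycS (α * rowSwap k)) = 2 * nc (q ⊔ idk k) := by
      rw [nc_cycS_mul_invol hα2 hγ2 hαfp hγfp, hcycα, hcycγ]
    have t2 : nc (cycS (rowSwap k * β)) = 2 * nc (q' ⊔ idk k) := by
      rw [nc_cycS_mul_invol hγ2 hβ2 hγfp hβfp, hcycγ, hcycβ, sup_comm]
    have t3 : nc (cycS ((α * rowSwap k) * (rowSwap k * β))) = 2 * nc (q ⊔ q') := by
      rw [hprod, nc_cycS_mul_invol hα2 hβ2 hαfp hβfp, hcycα, hcycβ]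
    have t4 : nc (cycS (α * rowSwap k) ⊔ cycS (rowSwap k * β))
        ≤ 2 * nc (q ⊔ q' ⊔ idk k) := by
      have horb := orb_le_two_mul hα2 hβ2 hγ2
      rwa [hcycα, hcycβ, hcycγ] at horb
    have hcard2 : Nat.card (Fin k ⊕ Fin k) = k + k := card_two_rows
    have hnq : Nat.card (Fin k ⊕ Fin k) = 2 * nc q := nc_brauer hf_fp hf_cls
    have hnq' : Nat.card (Fin k ⊕ Fin k) = 2 * nc q' := nc_brauer hf'_fp hf'_cls
    have hrq : nc (q ⊔ q') ≤ nc q := nc_le_of_le hqr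
    have hrq' : nc (q ⊔ q') ≤ nc q' := nc_le_of_le hq'r
    have hq_eq_r : q = q ⊔ q' := setoid_eq_of_le_of_nc_le hqr (by omega)
    have hq'_eq_r : q' = q ⊔ q' := setoid_eq_of_le_of_nc_le hq'r (by omega)
    exact hq_eq_r.trans hq'_eq_r.symm
  · intro p hpB
    ext q
    simp only [Set.mem_singleton_iff]
    constructor
    · intro hq
      obtain ⟨hle, heq⟩ := sp_invariant hq
      by_contra hne
      obtain ⟨f, hf_fp, hf_inv, hf_cls⟩ := brauer_partner hpB
      have hex : ∃ x y, p x y ∧ ¬ q x y := by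
        by_contra hall
        push_neg at hall
        exact hne (le_antisymm hle fun x y hxy => hall x y hxy)
      obtain ⟨x, y, hpxy, hnqxy⟩ := hex
      have hyx : y = f x := by
        rcases (hf_cls x y).mp hpxy with rfl | rfl
        · exact absurd (q.refl' y) hnqxy
        · rfl
      subst hyx
      have hxfx : x ≠ f x := (hf_fp x).symm
      have hclsx : ∀ z, p x z → z = x ∨ z = f x := fun z hz => (hf_cls x z).mp hz
      have hnc1 : nc (splitS p x (f x)) = nc p + 1 := nc_splitS hxfx hpxy hclsx
      have hq_p1 : q ≤ splitS p x (f x) := le_splitS hle hnqxy hpxy hclsx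
      have hjoin : splitS p x (f x) ⊔ idk k = p ⊔ idk k :=
        brauer_split_join hf_fp hf_inv hf_cls x
      have m := nc_mono (idk k) hq_p1
      rw [hjoin] at m
      omega
    · rintro rfl
      exact Relation.ReflTransGen.refl


end PartitionPaper
end
end
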